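/- The number of circulant matrix solutions X of the equation X^n + A_1 X^{n−1} + ... + A_n = 0, with A_1,...,A_n circulant d×d matrices over ℂ, is at most n^d. -/
import Mathlib

open Matrix Polynomial

def Cyc (d : ℕ) [NeZero d] : Matrix (Fin d) (Fin d) ℂ :=
  fun i j => if j = i + 1 then 1 else 0

def circ {d : ℕ} (a : Fin d → ℂ) : Matrix (Fin d) (Fin d) ℂ :=
  fun i j => a (j - i)

def IsCirc {d : ℕ} (A : Matrix (Fin d) (Fin d) ℂ) : Prop :=
  ∃ a : Fin d → ℂ, A = circ a

noncomputable def ζ (d : ℕ) : ℂ := Complex.exp (2 * Real.pi * Complex.I / d)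

noncomputable def Sm (d : ℕ) : Matrix (Fin d) (Fin d) ℂ :=
  fun i j => ζ d ^ ((i : ℕ) * (j : ℕ))

-- eigenvector
noncomputable def ev (d : ℕ) (j : Fin d) : Fin d → ℂ := fun i => ζ d ^ ((i : ℕ) * (j : ℕ))

-- Fourier coefficient functional
noncomputable def Ff {d : ℕ} [NeZero d] (X : Matrix (Fin d) (Fin d) ℂ) (j : Fin d) : ℂ :=
  ∑ t : Fin d, X 0 t * ζ d ^ ((t : ℕ) * (j : ℕ))

lemma zeta_pow_d {d : ℕ} (hd : d ≠ 0) : ζ d ^ d = 1 :=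
  (Complex.isPrimitiveRoot_exp d hd).pow_eq_one

lemma zeta_pow_mod {d : ℕ} (hd : d ≠ 0) {a b : ℕ} (h : a ≡ b [MOD d]) :
    ζ d ^ a = ζ d ^ b := by
  rw [pow_eq_pow_mod a (zeta_pow_d hd), pow_eq_pow_mod b (zeta_pow_d hd), h]

lemma circ_mulVec_ev {d : ℕ} [NeZero d] (a : Fin d → ℂ) (j : Fin d) :
    (circ a).mulVec (ev d j) = (Ff (circ a) j) • ev d j := by
  have hd : d ≠ 0 := NeZero.ne d
  funext i
  have hrow : ∀ t : Fin d, circ a 0 t = a t := by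
    intro t; simp [circ]
  simp only [mulVec, dotProduct, Ff, ev, Pi.smul_apply, smul_eq_mul]
  rw [Finset.sum_mul]
  rw [← Equiv.sum_comp (Equiv.addRight i) (fun k => circ a i k * ζ d ^ ((k : ℕ) * (j : ℕ)))]
  simp only [Equiv.coe_addRight]
  apply Finset.sum_congr rfl
  intro t _
  have h1 : circ a i (t + i) = a t := by simp [circ]
  rw [h1, hrow]
  have h2 : ζ d ^ (((t + i : Fin d) : ℕ) * (j : ℕ)) = ζ d ^ (((t : ℕ) + (i : ℕ)) * (j : ℕ)) := by
    apply zeta_pow_mod hd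
    exact (Nat.ModEq.mul_right _ (by rw [Fin.val_add]; exact Nat.mod_modEq _ _))
  rw [h2, add_mul, pow_add]
  ring

lemma pow_mulVec {d : ℕ} {A : Matrix (Fin d) (Fin d) ℂ} {v : Fin d → ℂ} {c : ℂ}
    (h : A.mulVec v = c • v) (m : ℕ) : (A ^ m).mulVec v = c ^ m • v := by
  induction m with
  | zero => simp
  | succ m ih =>
      rw [pow_succ, ← mulVec_mulVec, h, mulVec_smul, ih, smul_smul, pow_succ]
      ring_nf

-- Sm is vandermonde, invertible
lemma Sm_det_ne_zero {d : ℕ} (hd : d ≠ 0) : (Sm d).det ≠ 0 := by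
  have hprim := Complex.isPrimitiveRoot_exp d hd
  have : Sm d = Matrix.vandermonde (fun i : Fin d => ζ d ^ (i : ℕ)) := by
    funext i k; simp [Sm, Matrix.vandermonde, pow_mul]
  rw [this, Matrix.det_vandermonde]
  apply Finset.prod_ne_zero_iff.2
  intro i _
  apply Finset.prod_ne_zero_iff.2
  intro k hk
  rw [Finset.mem_Ioi] at hk
  intro hc
  have hkk : ((k : ℕ)) = (i : ℕ) := hprim.pow_inj k.isLt i.isLt (sub_eq_zero.mp hc)
  exact absurd (Fin.val_injective hkk) hk.ne'

lemma Ff_injOn {d : ℕ} [NeZero d] {X Y : Matrix (Fin d) (Fin d) ℂ}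
    (hX : IsCirc X) (hY : IsCirc Y) (h : ∀ j, Ff X j = Ff Y j) : X = Y := by
  obtain ⟨a, rfl⟩ := hX
  obtain ⟨b, rfl⟩ := hY
  have hv : ∀ (c : Fin d → ℂ) j, Ff (circ c) j = (Matrix.vecMul (circ c 0) (Sm d)) j := by
    intro c j; simp [Ff, Sm, vecMul, dotProduct]
  have hvm : Matrix.vecMul (circ a 0) (Sm d) = Matrix.vecMul (circ b 0) (Sm d) := by
    funext j; rw [← hv, ← hv]; exact h j
  have hinv : IsUnit (Sm d).det := isUnit_iff_ne_zero.2 (Sm_det_ne_zero (NeZero.ne d))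
  have := congrArg (fun v => Matrix.vecMul v (Sm d)⁻¹) hvm
  simp only [Matrix.vecMul_vecMul, Matrix.mul_nonsing_inv _ hinv, Matrix.vecMul_one] at this
  have hab : a = b := by
    funext t
    have := congrFun this t
    simpa [circ] using this
  rw [hab]

lemma sum_mulVec' {d m : ℕ} (s : Finset (Fin m)) (M : Fin m → Matrix (Fin d) (Fin d) ℂ)
    (v : Fin d → ℂ) : (∑ k ∈ s, M k).mulVec v = ∑ k ∈ s, (M k).mulVec v := by
  induction s using Finset.cons_induction with
  | empty => simp [Matrix.zero_mulVec]
  | cons a s ha ih => simp [Finset.sum_insert ha, Matrix.add_mulVec, ih]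

lemma card_rootSet_le {p : Polynomial ℂ} : Nat.card (p.rootSet ℂ) ≤ p.natDegree := by
  have h1 : p.rootSet ℂ = ↑(p.roots.toFinset) := by
    rw [Polynomial.rootSet_def, Polynomial.aroots_def]
    simp
  rw [h1, Nat.card_coe_set_eq, Set.ncard_coe_finset]
  exact le_trans (Multiset.toFinset_card_le _) (Polynomial.card_roots' p)

theorem stmt11 (d n : ℕ) (hn : 1 ≤ n) (A : Fin n → Matrix (Fin d) (Fin d) ℂ)
    (hA : ∀ k, IsCirc (A k)) :
    {X : Matrix (Fin d) (Fin d) ℂ | IsCirc X ∧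
        X ^ n + ∑ k : Fin n, A k * X ^ (n - 1 - (k : ℕ)) = 0}.Finite ∧
    {X : Matrix (Fin d) (Fin d) ℂ | IsCirc X ∧
        X ^ n + ∑ k : Fin n, A k * X ^ (n - 1 - (k : ℕ)) = 0}.ncard ≤ n ^ d := by
  set S := {X : Matrix (Fin d) (Fin d) ℂ | IsCirc X ∧
        X ^ n + ∑ k : Fin n, A k * X ^ (n - 1 - (k : ℕ)) = 0} with hS
  rcases Nat.eq_zero_or_pos d with hd0 | hdpos
  · subst hd0
    haveI : Subsingleton (Matrix (Fin 0) (Fin 0) ℂ) :=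
      ⟨fun x y => by funext i; exact absurd i.2 (by omega)⟩
    have hsub : S.Subsingleton := fun x _ y _ => Subsingleton.elim x y
    refine ⟨hsub.finite, ?_⟩
    rw [pow_zero]
    exact (Set.ncard_le_one hsub.finite).mpr fun a ha b hb => hsub ha hb
  · haveI : NeZero d := ⟨hdpos.ne'⟩
    -- the polynomials
    set p : Fin d → Polynomial ℂ := fun j =>
      Polynomial.X ^ n + ∑ k : Fin n, Polynomial.C (Ff (A k) j) *
        Polynomial.X ^ (n - 1 - (k : ℕ)) with hp
    have hqdeg : ∀ j, (∑ k : Fin n, Polynomial.C (Ff (A k) j) *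
        Polynomial.X ^ (n - 1 - (k : ℕ))).natDegree < n := by
      intro j
      have : (∑ k : Fin n, Polynomial.C (Ff (A k) j) *
          Polynomial.X ^ (n - 1 - (k : ℕ))).natDegree ≤ n - 1 := by
        apply Polynomial.natDegree_sum_le_of_forall_le
        intro k _
        refine le_trans (Polynomial.natDegree_C_mul_le _ _) ?_
        rw [Polynomial.natDegree_X_pow]
        omega
      omega
    have hpdeg : ∀ j, (p j).natDegree = n := by
      intro j
      rw [hp]
      rw [Polynomial.natDegree_add_eq_left_of_natDegree_lt
        (by rw [Polynomial.natDegree_X_pow]; exact hqdeg j), Polynomial.natDegree_X_pow]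
    have hpne : ∀ j, p j ≠ 0 := by
      intro j h
      have := hpdeg j
      rw [h, Polynomial.natDegree_zero] at this
      omega
    -- each solution gives roots
    have hroot : ∀ X ∈ S, ∀ j, (p j).IsRoot (Ff X j) := by
      rintro X ⟨⟨a, rfl⟩, heq⟩ j
      have heig := circ_mulVec_ev a j
      have hpow := fun m => pow_mulVec heig m
      have h0 : ((circ a) ^ n + ∑ k : Fin n, A k * (circ a) ^ (n - 1 - (k : ℕ))).mulVec
          (ev d j) = 0 := by rw [heq, Matrix.zero_mulVec]
      rw [Matrix.add_mulVec, sum_mulVec'] at h0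
      have hterm : ∀ k : Fin n, (A k * (circ a) ^ (n - 1 - (k : ℕ))).mulVec (ev d j)
          = (Ff (A k) j * Ff (circ a) j ^ (n - 1 - (k : ℕ))) • ev d j := by
        intro k
        obtain ⟨b, hb⟩ := hA k
        rw [← Matrix.mulVec_mulVec, hpow, Matrix.mulVec_smul, hb, circ_mulVec_ev,
          smul_smul, ← hb]
        ring_nf
      simp only [hterm, hpow] at h0
      have h1 : (Ff (circ a) j ^ n + ∑ k : Fin n,
          Ff (A k) j * Ff (circ a) j ^ (n - 1 - (k : ℕ))) • ev d j = 0 := by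
        rw [add_smul, Finset.sum_smul, h0]
      have h2 := congrFun h1 0
      simp only [Pi.smul_apply, smul_eq_mul, Pi.zero_apply] at h2
      have hev0 : ev d j 0 = 1 := by simp [ev]
      rw [hev0, mul_one] at h2
      simp only [Polynomial.IsRoot, hp, Polynomial.eval_add, Polynomial.eval_pow,
        Polynomial.eval_X, Polynomial.eval_finset_sum, Polynomial.eval_mul,
        Polynomial.eval_C]
      exact h2
    -- injection into products of root sets
    set G : S → (∀ j : Fin d, ((p j).rootSet ℂ)) := fun X j =>
      ⟨Ff X.1 j, by
        rw [Polynomial.mem_rootSet]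
        exact ⟨hpne j, by rw [Polynomial.aeval_def, Polynomial.eval₂_eq_eval_map,
          Algebra.algebraMap_self, Polynomial.map_id]; exact hroot X.1 X.2 j⟩⟩ with hG
    have hGinj : Function.Injective G := by
      rintro ⟨X, hX⟩ ⟨Y, hY⟩ h
      have : ∀ j, Ff X j = Ff Y j := fun j => congrArg Subtype.val (congrFun h j)
      exact Subtype.ext (Ff_injOn hX.1 hY.1 this)
    haveI : ∀ j : Fin d, Finite ((p j).rootSet ℂ) := fun j => Finite.of_fintype _
    haveI hfin : Finite ↥S := Finite.of_injective G hGinj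
    constructor
    · exact Set.finite_coe_iff.mp hfin
    · calc S.ncard = Nat.card ↥S := (Nat.card_coe_set_eq S).symm
        _ ≤ Nat.card (∀ j : Fin d, ((p j).rootSet ℂ)) :=
            Nat.card_le_card_of_injective G hGinj
        _ = ∏ j : Fin d, Nat.card ((p j).rootSet ℂ) := Nat.card_pi
        _ ≤ ∏ _j : Fin d, n := Finset.prod_le_prod' fun j _ => by
              have := card_rootSet_le (p := p j)
              rwa [hpdeg j] at this
        _ = n ^ d := by simp
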